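/- Given the soft-thresholding operator S_λ(q) = max(0, 1 - λ/|q|)·q for q ≠ 0 and S_λ(0) = 0 (λ > 0), S_λ(q) is the unique minimizer over p ∈ ℍ of λ|p| + (1/2)|p - q|². -/

import Mathlib

open Quaternion Classical

open scoped RealInnerProductSpace

theorem stmt_19 (l : ℝ) (hl : 0 < l) (q : ℍ[ℝ])
    (s : ℍ[ℝ]) (hs : s = if q = 0 then 0 else (max 0 (1 - l / ‖q‖)) • q) :
    ∀ p : ℍ[ℝ], p ≠ s →
      l * ‖s‖ + (1 / 2) * ‖s - q‖ ^ 2 < l * ‖p‖ + (1 / 2) * ‖p - q‖ ^ 2 := by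
  intro p hp
  have key1 : ⟪q - s, p⟫ ≤ l * ‖p‖ := by
    by_cases hq : q = 0
    · simp [hs, hq]
      positivity
    · have hqn : 0 < ‖q‖ := norm_pos_iff.mpr hq
      by_cases hle : ‖q‖ ≤ l
      · have hle' : 1 - l / ‖q‖ ≤ 0 := by
          have : 1 ≤ l / ‖q‖ := (one_le_div hqn).mpr hle
          linarith
        have hs0 : s = 0 := by
          rw [hs, if_neg hq, max_eq_left hle', zero_smul]
        rw [hs0, sub_zero]
        calc ⟪q, p⟫ ≤ ‖q‖ * ‖p‖ := real_inner_le_norm q p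
          _ ≤ l * ‖p‖ := mul_le_mul_of_nonneg_right hle (norm_nonneg p)
      · have hc : (0:ℝ) ≤ 1 - l / ‖q‖ := by
          have : l / ‖q‖ ≤ 1 := (div_le_one hqn).mpr (le_of_not_ge hle)
          linarith
        have hsv : s = (1 - l / ‖q‖) • q := by
          rw [hs, if_neg hq, max_eq_right hc]
        have hqs : q - s = (l / ‖q‖) • q := by
          rw [hsv, sub_smul, one_smul]; abel
        rw [hqs, real_inner_smul_left]
        have h1 : ⟪q, p⟫ ≤ ‖q‖ * ‖p‖ := real_inner_le_norm q p
        have h2 : 0 ≤ l / ‖q‖ := by positivity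
        calc l / ‖q‖ * ⟪q, p⟫ ≤ l / ‖q‖ * (‖q‖ * ‖p‖) :=
              mul_le_mul_of_nonneg_left h1 h2
          _ = l * ‖p‖ := by field_simp
  have key2 : ⟪q - s, s⟫ = l * ‖s‖ := by
    by_cases hq : q = 0
    · simp [hs, hq]
    · have hqn : 0 < ‖q‖ := norm_pos_iff.mpr hq
      by_cases hle : ‖q‖ ≤ l
      · have hle' : 1 - l / ‖q‖ ≤ 0 := by
          have : 1 ≤ l / ‖q‖ := (one_le_div hqn).mpr hle
          linarith
        have hs0 : s = 0 := by
          rw [hs, if_neg hq, max_eq_left hle', zero_smul]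
        simp [hs0]
      · have hc : (0:ℝ) ≤ 1 - l / ‖q‖ := by
          have : l / ‖q‖ ≤ 1 := (div_le_one hqn).mpr (le_of_not_ge hle)
          linarith
        have hsv : s = (1 - l / ‖q‖) • q := by
          rw [hs, if_neg hq, max_eq_right hc]
        have hqs : q - s = (l / ‖q‖) • q := by
          rw [hsv, sub_smul, one_smul]; abel
        rw [hqs, hsv, real_inner_smul_left, real_inner_smul_right,
          real_inner_self_eq_norm_sq, norm_smul, Real.norm_eq_abs, abs_of_nonneg hc]
        field_simp
  have hexp : ‖p - q‖ ^ 2 = ‖p - s‖ ^ 2 + 2 * ⟪p - s, s - q⟫ + ‖s - q‖ ^ 2 := by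
    have h := norm_add_sq_real (p - s) (s - q)
    rw [show p - s + (s - q) = p - q by abel] at h
    linarith
  have hinner : ⟪p - s, s - q⟫ = -⟪q - s, p⟫ + l * ‖s‖ := by
    have e1 : ⟪p - s, s - q⟫ = -⟪q - s, p - s⟫ := by
      rw [show s - q = -(q - s) by abel, inner_neg_right, real_inner_comm]
    rw [e1, inner_sub_right, key2]
    ring
  have hps : 0 < ‖p - s‖ ^ 2 :=
    pow_pos (norm_pos_iff.mpr (sub_ne_zero.mpr hp)) 2
  nlinarith [key1]
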